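/- On the open set D = {(x, φ, θ) ∈ ℝ³ : x > 0, 0 < φ < π/2}, define the smooth complex-valued functions A = sin θ coth x + i cot φ, B = sin θ cot φ − i coth x, C = cos θ. Then the complex-valued 1-form α = A dx + B dφ + C dθ satisfies the Frobenius integrability condition α ∧ dα = 0 on D; explicitly, A(∂_φ C − ∂_θ B) + B(∂_θ A − ∂_x C) + C(∂_x B − ∂_φ A) = 0 identically on D. (This 1-form spans the terminal derived system of the complex characteristic system V₊ of the Monge–Ampère system encoding the Darboux equation for the metric g₁ = (cosh⁴x)dx² + (sinh²x)dy².) -/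

import Mathlib

noncomputable section
open Real

/-- Partial derivative `∂ᵢ` of a complex-valued function on `ℝ³` (coordinates `x = p 0`,
`φ = p 1`, `θ = p 2`). -/
def pd3C (i : Fin 3) (f : (Fin 3 → ℝ) → ℂ) : (Fin 3 → ℝ) → ℂ :=
  fun p => fderiv ℝ f p (Pi.single i 1)

/-- `A = sin θ coth x + i cot φ`. -/
def AfunC : (Fin 3 → ℝ) → ℂ :=
  fun p => (Real.sin (p 2) * (Real.cosh (p 0) / Real.sinh (p 0)) : ℝ)
    + Complex.I * (Real.cos (p 1) / Real.sin (p 1) : ℝ)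

/-- `B = sin θ cot φ − i coth x`. -/
def BfunC : (Fin 3 → ℝ) → ℂ :=
  fun p => (Real.sin (p 2) * (Real.cos (p 1) / Real.sin (p 1)) : ℝ)
    - Complex.I * (Real.cosh (p 0) / Real.sinh (p 0) : ℝ)

/-- `C = cos θ`. -/
def CfunC : (Fin 3 → ℝ) → ℂ :=
  fun p => (Real.cos (p 2) : ℝ)

lemma pd_eq {f : (Fin 3 → ℝ) → ℂ} {L : (Fin 3 → ℝ) →L[ℝ] ℂ} {p : Fin 3 → ℝ}
    (h : HasFDerivAt f L p) (i : Fin 3) : pd3C i f p = L (Pi.single i 1) := by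
  rw [pd3C, h.fderiv]

/-- On `D = {x > 0, 0 < φ < π/2}`, the complex-valued 1-form `α = A dx + B dφ + C dθ`
with `A = sin θ coth x + i cot φ`, `B = sin θ cot φ − i coth x`, `C = cos θ` satisfies
the Frobenius condition `α ∧ dα = 0`, expressed by the scalar identity
`A(∂_φ C − ∂_θ B) + B(∂_θ A − ∂_x C) + C(∂_x B − ∂_φ A) = 0`.
(This 1-form spans the terminal derived system of the complex characteristic system `V₊`
for the Darboux equation of the metric `g₁ = cosh⁴x dx² + sinh²x dy²`.) -/
theorem frobenius_terminal_derived_system_g1 :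
    ∀ p : Fin 3 → ℝ, 0 < p 0 → 0 < p 1 → p 1 < Real.pi / 2 →
      AfunC p * (pd3C 1 CfunC p - pd3C 2 BfunC p)
        + BfunC p * (pd3C 2 AfunC p - pd3C 0 CfunC p)
        + CfunC p * (pd3C 0 BfunC p - pd3C 1 AfunC p) = 0 := by
  intro p hx hp1 hp2
  have hs0 : Real.sinh (p 0) ≠ 0 := ne_of_gt (Real.sinh_pos_iff.2 hx)
  have hsφ : Real.sin (p 1) ≠ 0 := by
    have := Real.pi_pos
    exact ne_of_gt (Real.sin_pos_of_pos_of_lt_pi hp1 (by linarith))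
  have hproj : ∀ i : Fin 3, HasFDerivAt (fun q : Fin 3 → ℝ => q i)
      (ContinuousLinearMap.proj i : (Fin 3 → ℝ) →L[ℝ] ℝ) p := by
    intro i
    exact (ContinuousLinearMap.proj (R := ℝ) (φ := fun _ : Fin 3 => ℝ) i).hasFDerivAt
  -- one variable derivatives composed with projections
  have hcoth : HasFDerivAt (fun q : Fin 3 → ℝ => Real.cosh (q 0) / Real.sinh (q 0))
      (((Real.sinh (p 0) * Real.sinh (p 0) - Real.cosh (p 0) * Real.cosh (p 0)) / Real.sinh (p 0) ^ 2)
        • (ContinuousLinearMap.proj 0 : (Fin 3 → ℝ) →L[ℝ] ℝ)) p := by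
    exact HasDerivAt.comp_hasFDerivAt p
      ((Real.hasDerivAt_cosh (p 0)).div (Real.hasDerivAt_sinh (p 0)) hs0) (hproj 0)
  have hcot : HasFDerivAt (fun q : Fin 3 → ℝ => Real.cos (q 1) / Real.sin (q 1))
      (((-Real.sin (p 1) * Real.sin (p 1) - Real.cos (p 1) * Real.cos (p 1)) / Real.sin (p 1) ^ 2)
        • (ContinuousLinearMap.proj 1 : (Fin 3 → ℝ) →L[ℝ] ℝ)) p := by
    exact HasDerivAt.comp_hasFDerivAt p
      ((Real.hasDerivAt_cos (p 1)).div (Real.hasDerivAt_sin (p 1)) hsφ) (hproj 1)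
  have hsinθ : HasFDerivAt (fun q : Fin 3 → ℝ => Real.sin (q 2))
      (Real.cos (p 2) • (ContinuousLinearMap.proj 2 : (Fin 3 → ℝ) →L[ℝ] ℝ)) p := by
    exact HasDerivAt.comp_hasFDerivAt p (Real.hasDerivAt_sin (p 2)) (hproj 2)
  have hcosθ : HasFDerivAt (fun q : Fin 3 → ℝ => Real.cos (q 2))
      ((-Real.sin (p 2)) • (ContinuousLinearMap.proj 2 : (Fin 3 → ℝ) →L[ℝ] ℝ)) p := by
    exact HasDerivAt.comp_hasFDerivAt p (Real.hasDerivAt_cos (p 2)) (hproj 2)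
  have hA : HasFDerivAt AfunC
      (Complex.ofRealCLM.comp
        (Real.sin (p 2) • (((Real.sinh (p 0) * Real.sinh (p 0) - Real.cosh (p 0) * Real.cosh (p 0)) / Real.sinh (p 0) ^ 2)
            • (ContinuousLinearMap.proj 0 : (Fin 3 → ℝ) →L[ℝ] ℝ))
          + (Real.cosh (p 0) / Real.sinh (p 0)) • (Real.cos (p 2) • (ContinuousLinearMap.proj 2 : (Fin 3 → ℝ) →L[ℝ] ℝ)))
        + Complex.I • Complex.ofRealCLM.comp
          (((-Real.sin (p 1) * Real.sin (p 1) - Real.cos (p 1) * Real.cos (p 1)) / Real.sin (p 1) ^ 2)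
            • (ContinuousLinearMap.proj 1 : (Fin 3 → ℝ) →L[ℝ] ℝ))) p := by
    exact (Complex.ofRealCLM.hasFDerivAt.comp p (hsinθ.mul hcoth)).add
      ((Complex.ofRealCLM.hasFDerivAt.comp p hcot).const_mul Complex.I)
  have hB : HasFDerivAt BfunC
      (Complex.ofRealCLM.comp
        (Real.sin (p 2) • (((-Real.sin (p 1) * Real.sin (p 1) - Real.cos (p 1) * Real.cos (p 1)) / Real.sin (p 1) ^ 2)
            • (ContinuousLinearMap.proj 1 : (Fin 3 → ℝ) →L[ℝ] ℝ))
          + (Real.cos (p 1) / Real.sin (p 1)) • (Real.cos (p 2) • (ContinuousLinearMap.proj 2 : (Fin 3 → ℝ) →L[ℝ] ℝ)))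
        - Complex.I • Complex.ofRealCLM.comp
          (((Real.sinh (p 0) * Real.sinh (p 0) - Real.cosh (p 0) * Real.cosh (p 0)) / Real.sinh (p 0) ^ 2)
            • (ContinuousLinearMap.proj 0 : (Fin 3 → ℝ) →L[ℝ] ℝ))) p := by
    exact (Complex.ofRealCLM.hasFDerivAt.comp p (hsinθ.mul hcot)).sub
      ((Complex.ofRealCLM.hasFDerivAt.comp p hcoth).const_mul Complex.I)
  have hC : HasFDerivAt CfunC
      (Complex.ofRealCLM.comp
        ((-Real.sin (p 2)) • (ContinuousLinearMap.proj 2 : (Fin 3 → ℝ) →L[ℝ] ℝ))) p := by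
    exact Complex.ofRealCLM.hasFDerivAt.comp p hcosθ
  rw [pd_eq hA 1, pd_eq hA 2, pd_eq hB 0, pd_eq hB 2, pd_eq hC 0, pd_eq hC 1]
  simp only [ContinuousLinearMap.add_apply, ContinuousLinearMap.sub_apply,
    ContinuousLinearMap.smul_apply, ContinuousLinearMap.coe_comp', Function.comp_apply,
    ContinuousLinearMap.proj_apply, Pi.single_eq_same, Complex.ofRealCLM_apply,
    Pi.single_eq_of_ne (by decide : (0:Fin 3) ≠ 1), Pi.single_eq_of_ne (by decide : (0:Fin 3) ≠ 2),
    Pi.single_eq_of_ne (by decide : (1:Fin 3) ≠ 0), Pi.single_eq_of_ne (by decide : (1:Fin 3) ≠ 2),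
    Pi.single_eq_of_ne (by decide : (2:Fin 3) ≠ 0), Pi.single_eq_of_ne (by decide : (2:Fin 3) ≠ 1)]
  simp only [AfunC, BfunC, CfunC]
  have hs0' : Complex.sinh (p 0) ≠ 0 := by
    rw [← Complex.ofReal_sinh]; exact_mod_cast hs0
  have hsφ' : Complex.sin (p 1) ≠ 0 := by
    rw [← Complex.ofReal_sin]; exact_mod_cast hsφ
  have hch : Complex.cosh (p 0) ^ 2 = Complex.sinh (p 0) ^ 2 + 1 := by
    linear_combination Complex.cosh_sq_sub_sinh_sq ((p 0 : ℝ) : ℂ)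
  have hsc : Complex.sin (p 1) ^ 2 + Complex.cos (p 1) ^ 2 = 1 := Complex.sin_sq_add_cos_sq (p 1)
  simp only [smul_eq_mul, mul_zero, mul_one, Complex.ofReal_zero]
  push_cast
  field_simp
  ring
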